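/- Let W ∈ A be fixed. If δ : A → M is linear, δ(I) = 0, and δ(W) = Aδ(B)* + B*δ(A) whenever AB* = W, then the map A ↦ Wδ(A) is a Jordan left derivation, i.e., Wδ(A²) = 2AWδ(A) for all A ∈ A. -/
import Mathlib


open MulOpposite

/-- If `δ(I) = 0` and `δ(W) = A δ(B)* + B* δ(A)` whenever `A B* = W`, then `W δ` is a
Jordan left derivation: `W δ(A²) = 2 A W δ(A)`. -/
theorem stmt8 {A : Type*} {M : Type*}
    [NormedRing A] [NormedAlgebra ℂ A] [CompleteSpace A] [StarRing A]
    [AddCommGroup M] [Module ℂ M] [Module A M] [Module Aᵐᵒᵖ M]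
    [SMulCommClass A Aᵐᵒᵖ M] [IsScalarTower ℂ A M] [IsScalarTower ℂ Aᵐᵒᵖ M]
    [StarAddMonoid M]
    (hstar_left : ∀ (a : A) (m : M), star (a • m) = op (star a) • star m)
    (hstar_right : ∀ (a : A) (m : M), star (op a • m) = star a • star m)
    (W : A)
    (δ : A →ₗ[ℂ] M) (hI : δ 1 = 0)
    (hδ : ∀ a b : A, a * star b = W → δ W = a • star (δ b) + star b • δ a) :
    ∀ a : A, W • δ (a * a) = (2 : ℂ) • (a • (W • δ a)) := by
  intro a
  -- commuting of ℂ-scalars past A-scalars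
  have hcs : ∀ (s : ℂ) (y : A) (m : M), y • (s • m) = s • (y • m) := by
    intro s y m
    rw [← smul_one_smul A s m, ← mul_smul, mul_smul_comm, mul_one, smul_assoc]
  -- choose a small nonzero scalar t
  have h2 : (0:ℝ) < 1 + ‖a‖ := by positivity
  set r : ℝ := (2 * (1 + ‖a‖))⁻¹ with hrdef
  have hrpos : 0 < r := by positivity
  set t : ℂ := (r : ℂ) with htdef
  have ht0 : t ≠ 0 := by
    simp only [htdef, ne_eq, Complex.ofReal_eq_zero]
    exact hrpos.ne'
  set x : A := t • a with hxdef
  have hx : ‖x‖ < 1 := by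
    rw [hxdef, norm_smul]
    have h3 : ‖t‖ = r := by
      rw [htdef, Complex.norm_real, Real.norm_eq_abs, abs_of_pos hrpos]
    rw [h3]
    have h4 : (2 * (1 + ‖a‖)) * r = 1 := mul_inv_cancel₀ (by positivity)
    nlinarith [norm_nonneg a, hrpos]
  -- units
  let u : Aˣ := Units.oneSub (-x) (by rwa [norm_neg])
  let w : Aˣ := Units.oneSub x hx
  have hu : (u : A) = 1 + x := by
    rw [show (u : A) = 1 - (-x) from rfl, sub_neg_eq_add]
  have hw : (w : A) = 1 - x := rfl
  have huw : (u : A) * w = (w : A) * u := by rw [hu, hw]; noncomm_ring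
  have hUW : u * w = w * u := Units.ext huw
  obtain ⟨c, hcdef⟩ : ∃ c : Aˣ, c = u * w := ⟨u * w, rfl⟩
  have hcval : (c : A) = 1 - x * x := by
    rw [hcdef, Units.val_mul, hu, hw]; noncomm_ring
  -- commutation facts
  have Cax : Commute a x := by
    show a * x = x * a
    rw [hxdef, mul_smul_comm, smul_mul_assoc]
  have Cac : Commute a (c : A) := by
    rw [hcval]
    exact (Commute.one_right a).sub_right (Cax.mul_right Cax)
  have Cacinv : Commute a ((c⁻¹ : Aˣ) : A) := Cac.units_inv_right
  have hcu : c * u = u * c := by rw [hcdef, mul_assoc, ← hUW, ← mul_assoc]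
  have hcw : c * w = w * c := by rw [hcdef, ← mul_assoc, ← hUW, mul_assoc]
  have Cuc : Commute (u : A) (c : A) := by
    show (u : A) * c = (c : A) * u
    rw [← Units.val_mul, ← Units.val_mul, hcu]
  have Cwc : Commute (w : A) (c : A) := by
    show (w : A) * c = (c : A) * w
    rw [← Units.val_mul, ← Units.val_mul, hcw]
  have Cucinv : Commute (u : A) ((c⁻¹ : Aˣ) : A) := Cuc.units_inv_right
  have Cwcinv : Commute (w : A) ((c⁻¹ : Aˣ) : A) := Cwc.units_inv_right
  -- inverse formulas
  have huinv : ((u⁻¹ : Aˣ) : A) = (w : A) * ((c⁻¹ : Aˣ) : A) := by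
    have h5 : u⁻¹ = w * c⁻¹ := by
      rw [hcdef, mul_inv_rev, mul_inv_cancel_left]
    rw [h5, Units.val_mul]
  have hwinv : ((w⁻¹ : Aˣ) : A) = (u : A) * ((c⁻¹ : Aˣ) : A) := by
    have h5 : w⁻¹ = u * c⁻¹ := by
      rw [hcdef, hUW, mul_inv_rev, mul_inv_cancel_left]
    rw [h5, Units.val_mul]
  -- the map E
  set E : A → M := fun z => star (δ (star z)) with hEdef
  have hEadd : ∀ p q : A, E (p + q) = E p + E q := by
    intro p q
    simp only [hEdef, star_add, map_add]
  -- main identity from hδ for any unit v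
  have main : ∀ v : Aˣ, E (((v⁻¹ : Aˣ) : A) * W)
      = ((v⁻¹ : Aˣ) : A) • δ W
        - (((v⁻¹ : Aˣ) : A) * (((v⁻¹ : Aˣ) : A) * W)) • δ (v : A) := by
    intro v
    have hab : (v : A) * star (star (((v⁻¹ : Aˣ) : A) * W)) = W := by
      rw [star_star, Units.mul_inv_cancel_left]
    have h := hδ (v : A) (star (((v⁻¹ : Aˣ) : A) * W)) hab
    rw [star_star] at h
    have h2 : (v : A) • E (((v⁻¹ : Aˣ) : A) * W)
        = δ W - (((v⁻¹ : Aˣ) : A) * W) • δ (v : A) := by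
      simp only [hEdef]
      rw [h]; abel
    calc E (((v⁻¹ : Aˣ) : A) * W)
        = ((v⁻¹ : Aˣ) : A) • ((v : A) • E (((v⁻¹ : Aˣ) : A) * W)) := by
          rw [← mul_smul, Units.inv_mul, one_smul]
      _ = _ := by rw [h2, smul_sub, ← mul_smul]
  -- δ values on the units
  have hδu : δ (u : A) = t • δ a := by
    rw [hu, hxdef, map_add, hI, map_smul, zero_add]
  have hδw : δ (w : A) = -(t • δ a) := by
    rw [hw, hxdef, map_sub, hI, map_smul, zero_sub]
  have hxx : x * x = (t * t) • (a * a) := by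
    rw [hxdef, smul_mul_assoc, mul_smul_comm, smul_smul]
  have hδc : δ (c : A) = -((t * t) • δ (a * a)) := by
    rw [hcval, hxx, map_sub, hI, map_smul, zero_sub]
  -- sum of inverses
  have hinv_sum : ((u⁻¹ : Aˣ) : A) + ((w⁻¹ : Aˣ) : A)
      = ((c⁻¹ : Aˣ) : A) + ((c⁻¹ : Aˣ) : A) := by
    rw [huinv, hwinv, ← add_mul]
    have h5 : (w : A) + (u : A) = 2 := by rw [hu, hw]; noncomm_ring; norm_num [two_smul]
    rw [h5, two_mul]
  have hsum : ((u⁻¹ : Aˣ) : A) * W + ((w⁻¹ : Aˣ) : A) * W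
      = ((c⁻¹ : Aˣ) : A) * W + ((c⁻¹ : Aˣ) : A) * W := by
    rw [← add_mul, ← add_mul, hinv_sum]
  have hkey : E (((u⁻¹ : Aˣ) : A) * W) + E (((w⁻¹ : Aˣ) : A) * W)
      = E (((c⁻¹ : Aˣ) : A) * W) + E (((c⁻¹ : Aˣ) : A) * W) := by
    rw [← hEadd, ← hEadd, hsum]
  rw [main u, main w, main c, hδu, hδw, hδc] at hkey
  -- abbreviations
  set P : M := (((u⁻¹ : Aˣ) : A) * (((u⁻¹ : Aˣ) : A) * W)) • δ a with hP
  set Q : M := (((w⁻¹ : Aˣ) : A) * (((w⁻¹ : Aˣ) : A) * W)) • δ a with hQ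
  set R : M := (((c⁻¹ : Aˣ) : A) * (((c⁻¹ : Aˣ) : A) * W)) • δ (a * a) with hR
  rw [smul_neg, smul_neg, hcs, hcs, hcs, ← hP, ← hQ, ← hR] at hkey
  have hδWsum : ((u⁻¹ : Aˣ) : A) • δ W + ((w⁻¹ : Aˣ) : A) • δ W
      = ((c⁻¹ : Aˣ) : A) • δ W + ((c⁻¹ : Aˣ) : A) • δ W := by
    rw [← add_smul, ← add_smul, hinv_sum]
  have H2 : t • Q - t • P = (t * t) • R + (t * t) • R := by
    have e1 : t • Q - t • P
        = ((((u⁻¹ : Aˣ) : A) • δ W - t • P) + (((w⁻¹ : Aˣ) : A) • δ W - -(t • Q)))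
          - (((u⁻¹ : Aˣ) : A) • δ W + ((w⁻¹ : Aˣ) : A) • δ W) := by abel
    rw [e1, hkey, hδWsum]
    abel
  -- element computation: w⁻²W - u⁻²W = (4t) • (a c⁻² W)
  have helem : (((w⁻¹ : Aˣ) : A) * (((w⁻¹ : Aˣ) : A) * W))
      - (((u⁻¹ : Aˣ) : A) * (((u⁻¹ : Aˣ) : A) * W))
      = (4 * t) • (a * (((c⁻¹ : Aˣ) : A) * (((c⁻¹ : Aˣ) : A) * W))) := by
    rw [huinv, hwinv]
    have e2 : (u : A) * ((c⁻¹ : Aˣ) : A) * ((u : A) * ((c⁻¹ : Aˣ) : A) * W)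
        = ((u : A) * (u : A)) * (((c⁻¹ : Aˣ) : A) * (((c⁻¹ : Aˣ) : A) * W)) := by
      simp only [mul_assoc]
      rw [Cucinv.symm.left_comm]
    have e3 : (w : A) * ((c⁻¹ : Aˣ) : A) * ((w : A) * ((c⁻¹ : Aˣ) : A) * W)
        = ((w : A) * (w : A)) * (((c⁻¹ : Aˣ) : A) * (((c⁻¹ : Aˣ) : A) * W)) := by
      simp only [mul_assoc]
      rw [Cwcinv.symm.left_comm]
    rw [e3, e2, ← sub_mul]
    have e4 : (u : A) * (u : A) - (w : A) * (w : A) = (4 * t) • a := by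
      have e5 : (u : A) * (u : A) - (w : A) * (w : A) = x + x + (x + x) := by
        rw [hu, hw]; noncomm_ring
      have e6 : x + x + (x + x) = (4 * t) • a := by
        rw [hxdef]
        module
      rw [e5, e6]
    rw [e4, smul_mul_assoc]
  have H3 : (t * (4 * t)) • ((a * (((c⁻¹ : Aˣ) : A) * (((c⁻¹ : Aˣ) : A) * W))) • δ a)
      = ((t * t) + (t * t)) • R := by
    rw [mul_smul, ← smul_assoc (4 * t) (a * (((c⁻¹ : Aˣ) : A) * (((c⁻¹ : Aˣ) : A) * W))) (δ a),
      ← helem, sub_smul, ← hQ, ← hP, smul_sub, H2, add_smul]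
  -- divide by 2 t²
  have H4 : (((c⁻¹ : Aˣ) : A) * (((c⁻¹ : Aˣ) : A) * W)) • δ (a * a)
      = (2 : ℂ) • ((a * (((c⁻¹ : Aˣ) : A) * (((c⁻¹ : Aˣ) : A) * W))) • δ a) := by
    have h6 := congrArg (fun m : M => ((t * t)⁻¹ * 2⁻¹ : ℂ) • m) H3
    simp only [smul_smul] at h6
    have h7 : ((t * t)⁻¹ * 2⁻¹ : ℂ) * (t * (4 * t)) = 2 := by
      field_simp
      ring
    have h8 : ((t * t)⁻¹ * 2⁻¹ : ℂ) * ((t * t) + (t * t)) = 1 := by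
      field_simp
      ring
    rw [h7, h8, one_smul] at h6
    rw [hR] at h6
    exact h6.symm
  -- multiply back by c²
  have hWform : W = (c : A) * ((c : A) * (((c⁻¹ : Aˣ) : A) * (((c⁻¹ : Aˣ) : A) * W))) := by
    rw [Units.mul_inv_cancel_left, Units.mul_inv_cancel_left]
  calc W • δ (a * a)
      = ((c : A) * ((c : A) * (((c⁻¹ : Aˣ) : A) * (((c⁻¹ : Aˣ) : A) * W)))) • δ (a * a) := by
        rw [← hWform]
    _ = (c : A) • ((c : A) • ((((c⁻¹ : Aˣ) : A) * (((c⁻¹ : Aˣ) : A) * W)) • δ (a * a))) := by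
        rw [mul_smul, mul_smul]
    _ = (2 : ℂ) • ((c : A) • ((c : A) • ((a * (((c⁻¹ : Aˣ) : A) * (((c⁻¹ : Aˣ) : A) * W))) • δ a))) := by
        rw [H4, hcs, hcs]
    _ = (2 : ℂ) • ((((c : A) * (c : A)) * (a * (((c⁻¹ : Aˣ) : A) * (((c⁻¹ : Aˣ) : A) * W)))) • δ a) := by
        rw [← mul_smul, ← mul_smul]
    _ = (2 : ℂ) • (a • (W • δ a)) := by
        have e5 : ((c : A) * (c : A)) * (a * (((c⁻¹ : Aˣ) : A) * (((c⁻¹ : Aˣ) : A) * W)))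
            = a * W := by
          rw [Cacinv.left_comm, Cacinv.left_comm, mul_assoc]
          rw [Units.mul_inv_cancel_left, Units.mul_inv_cancel_left]
        rw [e5, mul_smul]
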